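/- Let K be a division ring, Q a finite quiver, sigma : Q_1 -> Aut(K), and (Q,Z) locally gentle. In Lambda = K_sigma Q/<Z>, the images of the paths of Q that contain no subpath from Z form a left K-basis of Lambda. Consequently Lambda is finite-dimensional over K if and only if (Q,Z) is gentle. -/

import Mathlib

attribute [local instance] Classical.propDecidable

/-- A quiver: vertices, arrows, head and tail maps. -/
structure Quiv where
  V : Type
  A : Type
  h : A → V
  t : A → V

/-- A (possibly empty) list of arrows is a path when consecutive arrows compose:
`t aᵢ = h aᵢ₊₁` (paths are written right-to-left as in the paper). -/
def Quiv.IsPath (Q : Quiv) (p : List Q.A) : Prop :=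
  p.Chain' (fun x y => Q.t x = Q.h y)

/-- A locally gentle pair `(Q,Z)`: `Z` is a set of length-2 paths (pairs `(b,a)` with
`t b = h a`), every vertex is head (resp. tail) of at most two arrows, and each arrow
extends in at most one way inside `Z` and at most one way outside `Z` on each side. -/
structure LocallyGentle (Q : Quiv) (Z : Set (Q.A × Q.A)) : Prop where
  comp : ∀ p ∈ Z, Q.t p.1 = Q.h p.2
  head_two : ∀ (v : Q.V) (a b c : Q.A),
    Q.h a = v → Q.h b = v → Q.h c = v → a = b ∨ a = c ∨ b = c
  tail_two : ∀ (v : Q.V) (a b c : Q.A),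
    Q.t a = v → Q.t b = v → Q.t c = v → a = b ∨ a = c ∨ b = c
  rel_right : ∀ b a a' : Q.A, (b, a) ∈ Z → (b, a') ∈ Z → a = a'
  adm_right : ∀ b a a' : Q.A, Q.t b = Q.h a → Q.t b = Q.h a' →
    (b, a) ∉ Z → (b, a') ∉ Z → a = a'
  rel_left : ∀ b c c' : Q.A, (c, b) ∈ Z → (c', b) ∈ Z → c = c'
  adm_left : ∀ b c c' : Q.A, Q.t c = Q.h b → Q.t c' = Q.h b →
    (c, b) ∉ Z → (c', b) ∉ Z → c = c'

/-- A vertex is relational if some relation `ba ∈ Z` passes through it,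
i.e. `t b = v = h a`. -/
def Relational (Q : Quiv) (Z : Set (Q.A × Q.A)) (v : Q.V) : Prop :=
  ∃ b a : Q.A, (b, a) ∈ Z ∧ Q.t b = v ∧ Q.h a = v

/-- A presentation of the semilinear path algebra `K_σ Q` on a ring `Λ`:
a `K`-ring structure `ι`, trivial paths `e v`, arrows `ar x`, the defining relations,
and freeness: the paths of `Q` (trivial and nontrivial) form a left `K`-basis. -/
structure SLPA (K : Type) [DivisionRing K] (Q : Quiv) [Fintype Q.V]
    (σ : Q.A → K ≃+* K) (Λ : Type) [Ring Λ] where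
  ι : K →+* Λ
  e : Q.V → Λ
  ar : Q.A → Λ
  sum_e : (∑ v : Q.V, e v) = 1
  e_idem : ∀ v : Q.V, e v * e v = e v
  e_orth : ∀ u v : Q.V, u ≠ v → e u * e v = 0
  e_comm : ∀ (v : Q.V) (lam : K), e v * ι lam = ι lam * e v
  he_ar : ∀ x : Q.A, e (Q.h x) * ar x = ar x
  ar_te : ∀ x : Q.A, ar x * e (Q.t x) = ar x
  semilinear : ∀ (x : Q.A) (lam : K), ar x * ι lam = ι (σ x lam) * ar x
  free : Function.Bijective
    (fun c : (Q.V ⊕ {p : List Q.A // p ≠ [] ∧ Q.IsPath p}) →₀ K =>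
      c.sum fun p lam => ι lam * Sum.elim e (fun q => (q.1.map ar).prod) p)

section StmtAux

variable {K : Type} [DivisionRing K] {Q : Quiv} [Fintype Q.V]
  {σ : Q.A → K ≃+* K} {Λ : Type} [Ring Λ]

private lemma aux_head (S : SLPA K Q σ Λ) :
    ∀ (p : List Q.A) (hp : p ≠ []),
      S.e (Q.h (p.head hp)) * (p.map S.ar).prod = (p.map S.ar).prod
  | [], hp => absurd rfl hp
  | x :: l, _ => by
      rw [List.head_cons, List.map_cons, List.prod_cons, ← mul_assoc, S.he_ar]

private lemma aux_head0 (S : SLPA K Q σ Λ) (p : List Q.A) (hp : p ≠ []) (v : Q.V)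
    (hv : v ≠ Q.h (p.head hp)) : S.e v * (p.map S.ar).prod = 0 := by
  conv_lhs => rw [← aux_head S p hp]
  rw [← mul_assoc, S.e_orth _ _ hv, zero_mul]

private lemma aux_tail (S : SLPA K Q σ Λ) :
    ∀ (p : List Q.A) (hp : p ≠ []),
      (p.map S.ar).prod * S.e (Q.t (p.getLast hp)) = (p.map S.ar).prod
  | [], hp => absurd rfl hp
  | [x], _ => by simp [S.ar_te]
  | x :: y :: l, _ => by
      rw [List.getLast_cons (by simp : y :: l ≠ []), List.map_cons, List.prod_cons,
        mul_assoc, aux_tail S (y :: l) (by simp)]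

private lemma aux_tail0 (S : SLPA K Q σ Λ) (p : List Q.A) (hp : p ≠ []) (v : Q.V)
    (hv : Q.t (p.getLast hp) ≠ v) : (p.map S.ar).prod * S.e v = 0 := by
  conv_lhs => rw [← aux_tail S p hp]
  rw [mul_assoc, S.e_orth _ _ hv, mul_zero]

private lemma aux_semilin (S : SLPA K Q σ Λ) :
    ∀ (p : List Q.A) (lam : K), ∃ mu : K,
      (p.map S.ar).prod * S.ι lam = S.ι mu * (p.map S.ar).prod
  | [], lam => ⟨lam, by simp⟩
  | x :: l, lam => by
      obtain ⟨mu, hmu⟩ := aux_semilin S l lam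
      refine ⟨σ x mu, ?_⟩
      rw [List.map_cons, List.prod_cons, mul_assoc, hmu, ← mul_assoc, S.semilinear,
        mul_assoc]

private lemma aux_append_prod (S : SLPA K Q σ Λ) (p q : List Q.A) :
    ((p ++ q).map S.ar).prod = (p.map S.ar).prod * (q.map S.ar).prod := by
  rw [List.map_append, List.prod_append]

private lemma aux_noncomp (S : SLPA K Q σ Λ) (p q : List Q.A) (hp : p ≠ []) (hq : q ≠ [])
    (h : Q.t (p.getLast hp) ≠ Q.h (q.head hq)) :
    (p.map S.ar).prod * (q.map S.ar).prod = 0 := by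
  conv_lhs => rw [← aux_head S q hq]
  rw [← mul_assoc, aux_tail0 S p hp _ h, zero_mul]

private lemma aux_path_append (Q' : Quiv) (p q : List Q'.A) (hp : p ≠ []) (hq : q ≠ [])
    (hpp : Q'.IsPath p) (hqp : Q'.IsPath q)
    (h : Q'.t (p.getLast hp) = Q'.h (q.head hq)) : Q'.IsPath (p ++ q) := by
  refine List.isChain_append.mpr ⟨hpp, hqp, ?_⟩
  intro a ha b hb
  rw [List.getLast?_eq_getLast hp] at ha
  rw [List.head?_eq_head hq] at hb
  cases ha
  cases hb
  exact h

private def stmtE (S : SLPA K Q σ Λ) :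
    (Q.V ⊕ {p : List Q.A // p ≠ [] ∧ Q.IsPath p}) → Λ :=
  Sum.elim S.e (fun q => (q.1.map S.ar).prod)

private noncomputable def stmtF (S : SLPA K Q σ Λ) :
    ((Q.V ⊕ {p : List Q.A // p ≠ [] ∧ Q.IsPath p}) →₀ K) →+ Λ :=
  Finsupp.liftAddHom fun b => (AddMonoidHom.mulRight (stmtE S b)).comp S.ι.toAddMonoidHom

private lemma stmtF_apply (S : SLPA K Q σ Λ)
    (c : (Q.V ⊕ {p : List Q.A // p ≠ [] ∧ Q.IsPath p}) →₀ K) :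
    stmtF S c = c.sum fun b lam => S.ι lam * stmtE S b := by
  rw [stmtF, Finsupp.liftAddHom_apply]
  rfl

private lemma stmtF_bij (S : SLPA K Q σ Λ) : Function.Bijective (stmtF S) := by
  have h : ⇑(stmtF S) = fun c => c.sum fun p lam =>
      S.ι lam * Sum.elim S.e (fun q => (q.1.map S.ar).prod) p :=
    funext fun c => stmtF_apply S c
  rw [h]
  exact S.free

private def stmtM (S : SLPA K Q σ Λ) (Z : Set (Q.A × Q.A)) : AddSubmonoid Λ :=
  AddSubmonoid.closure {x | ∃ (lam : K) (p : List Q.A),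
    (p ≠ [] ∧ Q.IsPath p ∧ ¬ p.Chain' (fun a b => (a, b) ∉ Z)) ∧
      x = S.ι lam * (p.map S.ar).prod}

private lemma aux_keyD (S : SLPA K Q σ Λ) (Z : Set (Q.A × Q.A)) (r : Λ) (p : List Q.A)
    (hp : p ≠ []) (hpath : Q.IsPath p) (hbad : ¬ p.Chain' (fun a b => (a, b) ∉ Z)) :
    r * (p.map S.ar).prod ∈ stmtM S Z := by
  obtain ⟨c, rfl⟩ := (stmtF_bij S).surjective r
  rw [stmtF_apply, Finsupp.sum_mul]
  refine AddSubmonoid.sum_mem _ fun b _ => ?_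
  rcases b with v | ⟨q, hq1, hq2⟩ <;>
    simp only [stmtE, Sum.elim_inl, Sum.elim_inr]
  · by_cases hv : v = Q.h (p.head hp)
    · subst hv
      rw [mul_assoc, aux_head S p hp]
      exact AddSubmonoid.subset_closure ⟨_, p, ⟨hp, hpath, hbad⟩, rfl⟩
    · rw [mul_assoc, aux_head0 S p hp v hv, mul_zero]
      exact zero_mem _
  · by_cases hcomp : Q.t (q.getLast hq1) = Q.h (p.head hp)
    · rw [mul_assoc, ← aux_append_prod]
      refine AddSubmonoid.subset_closure ⟨_, q ++ p, ⟨?_, ?_, ?_⟩, rfl⟩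
      · exact fun h => hp (List.append_eq_nil_iff.mp h).2
      · exact aux_path_append Q q p hq1 hp hq2 hpath hcomp
      · exact fun hch => hbad (List.isChain_append.mp hch).2.1
    · rw [mul_assoc, aux_noncomp S q p hq1 hp hcomp, mul_zero]
      exact zero_mem _

private lemma aux_keyL (S : SLPA K Q σ Λ) (Z : Set (Q.A × Q.A)) {m : Λ}
    (hm : m ∈ stmtM S Z) : ∀ r : Λ, r * m ∈ stmtM S Z := by
  refine AddSubmonoid.closure_induction (motive := fun x _ => ∀ r : Λ, r * x ∈ stmtM S Z)
    ?_ ?_ ?_ hm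
  · rintro x ⟨lam, p, ⟨hp1, hp2, hp3⟩, rfl⟩ r
    rw [← mul_assoc]
    exact aux_keyD S Z _ p hp1 hp2 hp3
  · intro r
    rw [mul_zero]
    exact zero_mem _
  · intro x y _ _ hx hy r
    rw [mul_add]
    exact add_mem (hx r) (hy r)

private lemma aux_keyR (S : SLPA K Q σ Λ) (Z : Set (Q.A × Q.A)) (p : List Q.A)
    (hp : p ≠ []) (hpath : Q.IsPath p) (hbad : ¬ p.Chain' (fun a b => (a, b) ∉ Z))
    (u : Λ) : (p.map S.ar).prod * u ∈ stmtM S Z := by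
  obtain ⟨c, rfl⟩ := (stmtF_bij S).surjective u
  rw [stmtF_apply, Finsupp.mul_sum]
  refine AddSubmonoid.sum_mem _ fun b _ => ?_
  dsimp only
  obtain ⟨mu, hmu⟩ := aux_semilin S p (c b)
  rw [← mul_assoc, hmu, mul_assoc]
  rcases b with v | ⟨q, hq1, hq2⟩ <;>
    simp only [stmtE, Sum.elim_inl, Sum.elim_inr]
  · by_cases hv : Q.t (p.getLast hp) = v
    · subst hv
      rw [aux_tail S p hp]
      exact AddSubmonoid.subset_closure ⟨mu, p, ⟨hp, hpath, hbad⟩, rfl⟩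
    · rw [aux_tail0 S p hp v hv, mul_zero]
      exact zero_mem _
  · by_cases hcomp : Q.t (p.getLast hp) = Q.h (q.head hq1)
    · rw [← aux_append_prod]
      refine AddSubmonoid.subset_closure ⟨mu, p ++ q, ⟨?_, ?_, ?_⟩, rfl⟩
      · exact fun h => hp (List.append_eq_nil_iff.mp h).1
      · exact aux_path_append Q p q hp hq1 hpath hq2 hcomp
      · exact fun hch => hbad (List.isChain_append.mp hch).1
    · rw [aux_noncomp S p q hp hq1 hcomp, mul_zero]
      exact zero_mem _

private lemma aux_lemA (S : SLPA K Q σ Λ) (Z : Set (Q.A × Q.A)) :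
    ∀ p : List Q.A, ¬ p.Chain' (fun a b => (a, b) ∉ Z) →
      (p.map S.ar).prod ∈
        Ideal.span {z : Λ | ∃ pr ∈ Z, ∃ u : Λ, z = S.ar pr.1 * S.ar pr.2 * u}
  | [], h => absurd List.isChain_nil h
  | [x], h => absurd (List.isChain_singleton x) h
  | x :: y :: l, h => by
      by_cases hxy : (x, y) ∈ Z
      · refine Ideal.subset_span ⟨(x, y), hxy, (l.map S.ar).prod, ?_⟩
        simp [mul_assoc]
      · have h2 : ¬ (y :: l).Chain' (fun a b => (a, b) ∉ Z) := by
          intro hc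
          exact h (List.isChain_cons_cons.mpr ⟨hxy, hc⟩)
        have hmem := aux_lemA S Z (y :: l) h2
        rw [List.map_cons, List.prod_cons]
        exact Ideal.mul_mem_left _ _ hmem

private lemma aux_kerM (S : SLPA K Q σ Λ) (Z : Set (Q.A × Q.A)) {y : Λ}
    (hy : y ∈ Ideal.span {z : Λ | ∃ pr ∈ Z, ∃ u : Λ, z = S.ar pr.1 * S.ar pr.2 * u}) :
    y ∈ stmtM S Z := by
  refine Submodule.span_induction (p := fun x _ => x ∈ stmtM S Z) ?_ (zero_mem _)
    (fun a b _ _ ha hb => add_mem ha hb) ?_ hy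
  · rintro x ⟨⟨b, a⟩, hba, u, rfl⟩
    by_cases hc : Q.t b = Q.h a
    · have hpath2 : Q.IsPath [b, a] := List.isChain_cons_cons.mpr ⟨hc, List.isChain_singleton a⟩
      have hbad2 : ¬ ([b, a]).Chain' (fun x y => (x, y) ∉ Z) :=
        fun hch => (List.isChain_cons_cons.mp hch).1 hba
      have hmem := aux_keyR S Z [b, a] (by simp) hpath2 hbad2 u
      have heq : S.ar b * S.ar a * u = ([b, a].map S.ar).prod * u := by
        simp [mul_assoc]
      rw [heq]
      exact hmem
    · have h0 : S.ar b * S.ar a = 0 := by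
        calc S.ar b * S.ar a
            = (S.ar b * S.e (Q.t b)) * (S.e (Q.h a) * S.ar a) := by
              rw [S.ar_te, S.he_ar]
          _ = S.ar b * ((S.e (Q.t b) * S.e (Q.h a)) * S.ar a) := by
              rw [mul_assoc, ← mul_assoc (S.e (Q.t b))]
          _ = 0 := by rw [S.e_orth _ _ hc, zero_mul, mul_zero]
      rw [h0, zero_mul]
      exact zero_mem _
  · intro a x _ hx
    rw [smul_eq_mul]
    exact aux_keyL S Z hx a

private lemma aux_Mrepr (S : SLPA K Q σ Λ) (Z : Set (Q.A × Q.A)) {m : Λ}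
    (hm : m ∈ stmtM S Z) :
    ∃ d : (Q.V ⊕ {p : List Q.A // p ≠ [] ∧ Q.IsPath p}) →₀ K,
      (∀ b ∈ d.support, ∃ q : {p : List Q.A // p ≠ [] ∧ Q.IsPath p},
        b = Sum.inr q ∧ ¬ q.1.Chain' (fun a b => (a, b) ∉ Z)) ∧ m = stmtF S d := by
  refine AddSubmonoid.closure_induction
    (motive := fun x _ => ∃ d : (Q.V ⊕ {p : List Q.A // p ≠ [] ∧ Q.IsPath p}) →₀ K,
      (∀ b ∈ d.support, ∃ q : {p : List Q.A // p ≠ [] ∧ Q.IsPath p},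
        b = Sum.inr q ∧ ¬ q.1.Chain' (fun a b => (a, b) ∉ Z)) ∧ x = stmtF S d)
    ?_ ?_ ?_ hm
  · rintro x ⟨lam, p, ⟨hp1, hp2, hp3⟩, rfl⟩
    refine ⟨Finsupp.single (Sum.inr ⟨p, hp1, hp2⟩) lam, ?_, ?_⟩
    · intro b hb
      have hb' := Finsupp.support_single_subset hb
      rw [Finset.mem_singleton] at hb'
      exact ⟨⟨p, hp1, hp2⟩, hb', hp3⟩
    · rw [stmtF_apply, Finsupp.sum_single_index (by simp)]
      rfl
  · exact ⟨0, by simp, by rw [map_zero]⟩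
  · rintro x y _ _ ⟨d₁, hs₁, rfl⟩ ⟨d₂, hs₂, rfl⟩
    refine ⟨d₁ + d₂, ?_, by rw [map_add]⟩
    intro b hb
    rcases Finset.mem_union.mp (Finsupp.support_add hb) with h | h
    exacts [hs₁ b h, hs₂ b h]

private def stmtEmb (Q' : Quiv) (Z : Set (Q'.A × Q'.A)) :
    (Q'.V ⊕ {p : List Q'.A // p ≠ [] ∧ Q'.IsPath p ∧ p.Chain' (fun x y => (x, y) ∉ Z)}) ↪
      (Q'.V ⊕ {p : List Q'.A // p ≠ [] ∧ Q'.IsPath p}) where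
  toFun := Sum.elim Sum.inl (fun q => Sum.inr ⟨q.1, q.2.1, q.2.2.1⟩)
  inj' := by
    rintro (v | q) (w | r) h
    · simp only [Sum.elim_inl, Sum.inl.injEq] at h
      exact congrArg Sum.inl h
    · exact absurd h (by simp)
    · exact absurd h (by simp)
    · simp only [Sum.elim_inr, Sum.inr.injEq, Subtype.mk.injEq] at h
      exact congrArg Sum.inr (Subtype.ext h)

private def stmtGood (Q' : Quiv) (Z : Set (Q'.A × Q'.A)) :
    (Q'.V ⊕ {p : List Q'.A // p ≠ [] ∧ Q'.IsPath p}) → Prop :=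
  Sum.elim (fun _ => True) (fun q => q.1.Chain' (fun x y => (x, y) ∉ Z))

end StmtAux


/-- In `Λ₀ = K_σ Q/⟨Z⟩` (modelled by a surjection `π` from the semilinear path algebra
with kernel `⟨Z⟩`), the images of the `Z`-avoiding paths form a left `K`-basis; hence
`Λ₀` is finite-dimensional over `K` iff `(Q,Z)` is gentle (finitely many admissible
paths). -/
theorem stmt18 (K : Type) [DivisionRing K] (Q : Quiv) [Fintype Q.V] [Finite Q.A]
    (σ : Q.A → K ≃+* K) (Z : Set (Q.A × Q.A)) (lg : LocallyGentle Q Z)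
    (Λfree Λ₀ : Type) [Ring Λfree] [Ring Λ₀] (S : SLPA K Q σ Λfree)
    (π : Λfree →+* Λ₀) (hsurj : Function.Surjective π)
    (hker : ∀ y : Λfree, π y = 0 ↔
      y ∈ Ideal.span {z : Λfree | ∃ p ∈ Z, ∃ u : Λfree, z = S.ar p.1 * S.ar p.2 * u}) :
    Function.Bijective
      (fun c : (Q.V ⊕ {p : List Q.A // p ≠ [] ∧ Q.IsPath p ∧
          p.Chain' (fun x y => (x, y) ∉ Z)}) →₀ K =>
        π (c.sum fun p lam => S.ι lam * Sum.elim S.e (fun q => (q.1.map S.ar).prod) p)) ∧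
    ((∃ (n : ℕ) (g : Fin n → Λ₀), ∀ x : Λ₀, ∃ c : Fin n → K,
        x = ∑ i, π (S.ι (c i)) * g i) ↔
      {p : List Q.A | Q.IsPath p ∧ p.Chain' (fun x y => (x, y) ∉ Z)}.Finite) := by
    classical
  -- the path-sum map rewritten through the free-algebra additive hom
  have hgoodemb : ∀ a, stmtGood Q Z (stmtEmb Q Z a) := by
    rintro (v | r)
    · exact trivial
    · exact r.2.2.2
  have hFE : ∀ c : (Q.V ⊕ {p : List Q.A // p ≠ [] ∧ Q.IsPath p ∧
      p.Chain' (fun x y => (x, y) ∉ Z)}) →₀ K,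
      (c.sum fun p lam => S.ι lam * Sum.elim S.e (fun q => (q.1.map S.ar).prod) p) =
        stmtF S (Finsupp.embDomain (stmtEmb Q Z) c) := by
    intro c
    rw [stmtF_apply, Finsupp.sum_embDomain]
    refine Finsupp.sum_congr fun b _ => ?_
    rcases b with v | q <;> rfl
  have hrange : ∀ b, stmtGood Q Z b → b ∈ Set.range ⇑(stmtEmb Q Z) := by
    rintro (v | q) hb
    · exact ⟨Sum.inl v, rfl⟩
    · exact ⟨Sum.inr ⟨q.1, q.2.1, q.2.2, hb⟩, congrArg Sum.inr (Subtype.ext rfl)⟩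
  -- elements supported on Z-avoiding paths that map to zero are zero
  have hgood0 : ∀ d : (Q.V ⊕ {p : List Q.A // p ≠ [] ∧ Q.IsPath p}) →₀ K,
      (∀ b ∈ d.support, stmtGood Q Z b) → π (stmtF S d) = 0 → d = 0 := by
    intro d hgood h0
    have h2 := aux_kerM S Z ((hker _).mp h0)
    obtain ⟨d', hd's, hd'e⟩ := aux_Mrepr S Z h2
    have hdd : d = d' := (stmtF_bij S).injective hd'e
    subst hdd
    refine Finsupp.support_eq_empty.mp (Finset.eq_empty_of_forall_notMem fun b hb => ?_)
    obtain ⟨q, rfl, hq2⟩ := hd's b hb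
    exact hq2 (hgood _ hb)
  have hinj : Function.Injective
      (fun c : (Q.V ⊕ {p : List Q.A // p ≠ [] ∧ Q.IsPath p ∧
          p.Chain' (fun x y => (x, y) ∉ Z)}) →₀ K =>
        π (c.sum fun p lam => S.ι lam * Sum.elim S.e (fun q => (q.1.map S.ar).prod) p)) := by
    intro c₁ c₂ h
    simp only [hFE] at h
    have hd : π (stmtF S (Finsupp.embDomain (stmtEmb Q Z) c₁ -
        Finsupp.embDomain (stmtEmb Q Z) c₂)) = 0 := by
      rw [map_sub, map_sub, h, sub_self]
    have hsupp : ∀ b ∈ (Finsupp.embDomain (stmtEmb Q Z) c₁ -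
        Finsupp.embDomain (stmtEmb Q Z) c₂).support, stmtGood Q Z b := by
      intro b hb
      rcases Finset.mem_union.mp (Finsupp.support_sub hb) with h' | h' <;>
      · rw [Finsupp.support_embDomain] at h'
        obtain ⟨a, _, rfl⟩ := Finset.mem_map.mp h'
        exact hgoodemb a
    have hz := hgood0 _ hsupp hd
    exact Finsupp.embDomain_injective _ (sub_eq_zero.mp hz)
  have hsurjmap : Function.Surjective
      (fun c : (Q.V ⊕ {p : List Q.A // p ≠ [] ∧ Q.IsPath p ∧
          p.Chain' (fun x y => (x, y) ∉ Z)}) →₀ K =>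
        π (c.sum fun p lam => S.ι lam * Sum.elim S.e (fun q => (q.1.map S.ar).prod) p)) := by
    intro x
    obtain ⟨y, rfl⟩ := hsurj x
    obtain ⟨c, rfl⟩ := (stmtF_bij S).surjective y
    have hsplit : stmtF S c = stmtF S (Finsupp.filter (stmtGood Q Z) c) +
        stmtF S (Finsupp.filter (fun b => ¬ stmtGood Q Z b) c) := by
      rw [← map_add, Finsupp.filter_pos_add_filter_neg]
    have hzero : π (stmtF S (Finsupp.filter (fun b => ¬ stmtGood Q Z b) c)) = 0 := by
      rw [stmtF_apply, map_finsuppSum]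
      refine Finset.sum_eq_zero fun b hb => ?_
      have hb' : ¬ stmtGood Q Z b := by
        rw [Finsupp.support_filter] at hb
        exact (Finset.mem_filter.mp hb).2
      rcases b with v | q
      · exact absurd trivial hb'
      · simp only [stmtE, Sum.elim_inr]
        rw [map_mul, (hker _).mpr (aux_lemA S Z q.1 hb'), mul_zero]
    refine ⟨Finsupp.comapDomain (stmtEmb Q Z) (Finsupp.filter (stmtGood Q Z) c)
      ((stmtEmb Q Z).injective.injOn), ?_⟩
    have hemb : Finsupp.embDomain (stmtEmb Q Z)
        (Finsupp.comapDomain (stmtEmb Q Z) (Finsupp.filter (stmtGood Q Z) c)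
          ((stmtEmb Q Z).injective.injOn)) = Finsupp.filter (stmtGood Q Z) c := by
      ext b
      by_cases hb : b ∈ Set.range ⇑(stmtEmb Q Z)
      · obtain ⟨a, rfl⟩ := hb
        rw [Finsupp.embDomain_apply_self, Finsupp.comapDomain_apply]
      · rw [Finsupp.embDomain_notin_range _ _ _ hb]
        have hng : ¬ stmtGood Q Z b := fun hg => hb (hrange b hg)
        rw [Finsupp.filter_apply, if_neg hng]
    show π _ = π (stmtF S c)
    rw [hFE, hemb, hsplit, map_add, hzero, add_zero]
  refine ⟨⟨hinj, hsurjmap⟩, ?_, ?_⟩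
  · -- finitely spanned → finitely many admissible paths
    rintro ⟨n, g, hg⟩
    letI : Module K Λ₀ := Module.compHom Λ₀ (π.comp S.ι)
    have hsmul : ∀ (lam : K) (z : Λ₀), lam • z = π (S.ι lam) * z := fun _ _ => rfl
    have hfinΛ : Module.Finite K Λ₀ := by
      rw [Module.finite_def, Submodule.fg_def]
      refine ⟨Set.range g, Set.finite_range g, ?_⟩
      rw [eq_top_iff]
      rintro x -
      obtain ⟨c, rfl⟩ := hg x
      refine Submodule.sum_mem _ fun i _ => ?_
      rw [← hsmul]
      exact Submodule.smul_mem _ _ (Submodule.subset_span ⟨i, rfl⟩)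
    have hFlin : ∀ (lam : K) (d : (Q.V ⊕ {p : List Q.A // p ≠ [] ∧ Q.IsPath p}) →₀ K),
        stmtF S (lam • d) = S.ι lam * stmtF S d := by
      intro lam d
      rw [stmtF_apply, stmtF_apply, Finsupp.mul_sum,
        Finsupp.sum_smul_index (fun b => by simp)]
      refine Finsupp.sum_congr fun b _ => ?_
      rw [map_mul, mul_assoc]
    have hembsmul : ∀ (lam : K) (c : (Q.V ⊕ {p : List Q.A // p ≠ [] ∧ Q.IsPath p ∧
        p.Chain' (fun x y => (x, y) ∉ Z)}) →₀ K),
        Finsupp.embDomain (stmtEmb Q Z) (lam • c) =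
          lam • Finsupp.embDomain (stmtEmb Q Z) c := by
      intro lam c
      rw [Finsupp.embDomain_eq_mapDomain, Finsupp.embDomain_eq_mapDomain,
        Finsupp.mapDomain_smul]
    set L : ((Q.V ⊕ {p : List Q.A // p ≠ [] ∧ Q.IsPath p ∧
        p.Chain' (fun x y => (x, y) ∉ Z)}) →₀ K) →ₗ[K] Λ₀ :=
      { toFun := fun c =>
          π (c.sum fun p lam => S.ι lam * Sum.elim S.e (fun q => (q.1.map S.ar).prod) p),
        map_add' := by
          intro c₁ c₂
          simp only [hFE]
          rw [Finsupp.embDomain_add, map_add, map_add]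
        map_smul' := by
          intro lam c
          simp only [hFE, RingHom.id_apply]
          rw [hembsmul, hFlin, map_mul, hsmul] } with hL
    have hLbij : Function.Bijective ⇑L := ⟨hinj, hsurjmap⟩
    haveI : Module.Finite K ((Q.V ⊕ {p : List Q.A // p ≠ [] ∧ Q.IsPath p ∧
        p.Chain' (fun x y => (x, y) ∉ Z)}) →₀ K) :=
      Module.Finite.equiv (LinearEquiv.ofBijective L hLbij).symm
    have hftB : Fintype (Q.V ⊕ {p : List Q.A // p ≠ [] ∧ Q.IsPath p ∧
        p.Chain' (fun x y => (x, y) ∉ Z)}) :=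
      FiniteDimensional.fintypeBasisIndex (Finsupp.basisSingleOne (R := K))
    haveI := hftB
    have hTfin : Finite {p : List Q.A // p ≠ [] ∧ Q.IsPath p ∧
        p.Chain' (fun x y => (x, y) ∉ Z)} :=
      Finite.of_injective (Sum.inr (α := Q.V)) Sum.inr_injective
    have hsub : {p : List Q.A | Q.IsPath p ∧ p.Chain' (fun x y => (x, y) ∉ Z)} ⊆
        insert [] (Set.range (fun q : {p : List Q.A // p ≠ [] ∧ Q.IsPath p ∧
          p.Chain' (fun x y => (x, y) ∉ Z)} => q.1)) := by
      rintro p ⟨h1, h2⟩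
      by_cases hp : p = []
      · exact Set.mem_insert_iff.mpr (Or.inl hp)
      · exact Set.mem_insert_iff.mpr (Or.inr ⟨⟨p, hp, h1, h2⟩, rfl⟩)
    exact Set.Finite.subset ((Set.finite_range _).insert []) hsub
  · -- finitely many admissible paths → finitely spanned
    intro hfin
    haveI hT : Finite {p : List Q.A // p ≠ [] ∧ Q.IsPath p ∧
        p.Chain' (fun x y => (x, y) ∉ Z)} := by
      haveI := hfin.to_subtype
      exact Finite.of_injective
        (fun q => (⟨q.1, q.2.2.1, q.2.2.2⟩ :
          ↥{p : List Q.A | Q.IsPath p ∧ p.Chain' (fun x y => (x, y) ∉ Z)}))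
        (fun a b h => by
          apply Subtype.ext
          have := congrArg Subtype.val h
          simpa using this)
    letI : Fintype (Q.V ⊕ {p : List Q.A // p ≠ [] ∧ Q.IsPath p ∧
        p.Chain' (fun x y => (x, y) ∉ Z)}) := Fintype.ofFinite _
    refine ⟨Fintype.card (Q.V ⊕ {p : List Q.A // p ≠ [] ∧ Q.IsPath p ∧
        p.Chain' (fun x y => (x, y) ∉ Z)}),
      fun i => π (Sum.elim S.e (fun q => (q.1.map S.ar).prod)
        ((Fintype.equivFin _).symm i)), fun x => ?_⟩
    obtain ⟨c, rfl⟩ := hsurjmap x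
    refine ⟨fun i => c ((Fintype.equivFin _).symm i), ?_⟩
    show π (c.sum fun p lam => S.ι lam * Sum.elim S.e (fun q => (q.1.map S.ar).prod) p) = _
    rw [map_finsuppSum, Finsupp.sum_fintype _ _ (fun b => by simp)]
    rw [← Equiv.sum_comp (Fintype.equivFin _).symm
      (fun b => π (S.ι (c b) * Sum.elim S.e (fun q => (q.1.map S.ar).prod) b))]
    exact Finset.sum_congr rfl fun i _ => map_mul π _ _
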